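/- Let d ≥ 2, y ∈ ℝ^d \ {0}, and let Φ_{y,N}(x) = Σ_{m=0}^N J_m(x,y) be the degree-≤N truncation of the harmonic expansion of Φ(x-y) around 0. Then for all x with |x| ≤ |y|/2, one has |Φ(x-y) - Φ_{y,N}(x)| ≤ C_d · (N+1)^{d-2} · (4|x|/(3|y|))^{N+1} · Φ(y/4). -/

import Mathlib

open MeasureTheory Metric Filter

noncomputable section

abbrev Euc (d : ℕ) := EuclideanSpace ℝ (Fin d)

/-- Classical pointwise Laplacian. -/
def lap {d : ℕ} (f : Euc d → ℝ) (x : Euc d) : ℝ :=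
  ∑ i : Fin d, iteratedFDeriv ℝ 2 f x ![EuclideanSpace.single i 1, EuclideanSpace.single i 1]

/-- Laplacian of a polynomial. -/
def mvLap {d : ℕ} (q : MvPolynomial (Fin d) ℝ) : MvPolynomial (Fin d) ℝ :=
  ∑ i : Fin d, MvPolynomial.pderiv i (MvPolynomial.pderiv i q)

/-- Evaluation of a polynomial at a point of `ℝ^d`. -/
def peval {d : ℕ} (q : MvPolynomial (Fin d) ℝ) (x : Euc d) : ℝ :=
  MvPolynomial.eval (fun i => x i) q

/-- The fundamental solution of Laplace's equation. -/
def fundSol (d : ℕ) (x : Euc d) : ℝ :=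
  if d = 2 then -(1 / (2 * Real.pi)) * Real.log ‖x‖
  else ((d : ℝ) * ((d : ℝ) - 2) * (volume (ball (0 : Euc d) 1)).toReal)⁻¹ *
    ‖x‖ ^ ((2 : ℝ) - (d : ℝ))

/-- Membership in the Sobolev space `H¹(Ω)`. -/
def MemH1 {d : ℕ} (Ω : Set (Euc d)) (f : Euc d → ℝ) : Prop :=
  MemLp f 2 (volume.restrict Ω) ∧
    ∀ i : Fin d, MemLp (fun x => fderiv ℝ f x (EuclideanSpace.single i 1)) 2 (volume.restrict Ω)

lemma summable_aux' (p : ℕ) : Summable (fun n : ℕ => ((n : ℝ) + 1) ^ p * (2/3 : ℝ) ^ n) := by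
  have h : Summable (fun n : ℕ => (n : ℝ) ^ p * (2/3 : ℝ) ^ n) :=
    summable_pow_mul_geometric_of_norm_lt_one p
      (by rw [Real.norm_eq_abs]; rw [abs_of_pos] <;> norm_num)
  have h2 := ((summable_nat_add_iff 1).2 h).mul_left (3/2 : ℝ)
  refine h2.congr fun n => ?_
  push_cast
  ring

lemma eval_const_of_homog0' {d : ℕ} (q : MvPolynomial (Fin d) ℝ)
    (hq : q.IsHomogeneous 0) (a b : Fin d → ℝ) :
    MvPolynomial.eval a q = MvPolynomial.eval b q := by
  have h0 : q.totalDegree = 0 := Nat.le_zero.mp hq.totalDegree_le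
  rw [MvPolynomial.totalDegree_eq_zero_iff] at h0
  rw [MvPolynomial.eval_eq, MvPolynomial.eval_eq]
  refine Finset.sum_congr rfl fun m hm => ?_
  simp [h0 m hm]

lemma fundSol_ne' {d : ℕ} (hd : 2 ≤ d) (u v : Euc d) (hv : 0 < ‖v‖) (huv : ‖v‖ < ‖u‖) :
    fundSol d u ≠ fundSol d v := by
  intro h
  unfold fundSol at h
  by_cases h2 : d = 2
  · rw [if_pos h2, if_pos h2] at h
    have hπ : (0:ℝ) < Real.pi := Real.pi_pos
    have hc : -(1 / (2 * Real.pi)) ≠ 0 := by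
      have : (0:ℝ) < 1 / (2 * Real.pi) := by positivity
      intro hcc; rw [neg_eq_zero] at hcc; linarith
    have hlog : Real.log ‖v‖ < Real.log ‖u‖ := Real.log_lt_log hv huv
    have := mul_left_cancel₀ hc h
    linarith
  · rw [if_neg h2, if_neg h2] at h
    have hd3 : 3 ≤ d := by omega
    have hd3' : (3:ℝ) ≤ (d:ℝ) := by exact_mod_cast hd3
    have hvol : 0 < (volume (ball (0 : Euc d) 1)).toReal :=
      ENNReal.toReal_pos (measure_ball_pos volume 0 one_pos).ne' measure_ball_lt_top.ne
    have hk : ((d : ℝ) * ((d : ℝ) - 2) * (volume (ball (0 : Euc d) 1)).toReal)⁻¹ ≠ 0 := by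
      have : (0:ℝ) < (d : ℝ) * ((d : ℝ) - 2) * (volume (ball (0 : Euc d) 1)).toReal :=
        mul_pos (mul_pos (by linarith) (by linarith)) hvol
      exact (inv_pos.mpr this).ne'
    have he : ((2:ℝ) - (d:ℝ)) < 0 := by linarith
    have hlt : ‖u‖ ^ ((2:ℝ) - (d:ℝ)) < ‖v‖ ^ ((2:ℝ) - (d:ℝ)) :=
      Real.rpow_lt_rpow_of_neg hv huv he
    have := mul_left_cancel₀ hk h
    linarith

set_option maxHeartbeats 1000000 in
/-- tail bound for the truncated harmonic expansion of `x ↦ Φ(x-y)`. -/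
theorem stmt_4 (d : ℕ) (hd : 2 ≤ d) (C : ℝ) (hC : 0 ≤ C) :
    ∃ C' : ℝ, 0 < C' ∧
      ∀ y : Euc d, y ≠ 0 →
        ∀ J : ℕ → Euc d → ℝ,
          (∀ m : ℕ, ∃ q : MvPolynomial (Fin d) ℝ,
            q.IsHomogeneous m ∧ mvLap q = 0 ∧ J m = peval q) →
          (∀ x ∈ ball (0 : Euc d) ‖y‖, HasSum (fun m => J m x) (fundSol d (x - y))) →
          (∀ m : ℕ, 1 ≤ m → ∀ x : Euc d,
            |J m x| ≤ C * (m : ℝ) ^ (d - 2) * (4 * ‖x‖ / (3 * ‖y‖)) ^ m *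
              fundSol d ((4 : ℝ)⁻¹ • y)) →
          ∀ N : ℕ, ∀ x : Euc d, ‖x‖ ≤ ‖y‖ / 2 →
            |fundSol d (x - y) - ∑ m ∈ Finset.range (N + 1), J m x|
              ≤ C' * ((N : ℝ) + 1) ^ (d - 2) * (4 * ‖x‖ / (3 * ‖y‖)) ^ (N + 1) *
                  fundSol d ((4 : ℝ)⁻¹ • y) := by
  set p := d - 2 with hp
  set M := ∑' n : ℕ, (((n : ℝ) + 1) ^ p * (2/3 : ℝ) ^ n) with hM
  have hM0 : 0 ≤ M := tsum_nonneg fun n => by positivity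
  refine ⟨C * M + 1, by positivity, ?_⟩
  intro y hy J hJ hSum hJb
  have hy0 : 0 < ‖y‖ := norm_pos_iff.mpr hy
  set Φ := fundSol d ((4 : ℝ)⁻¹ • y) with hΦdef
  -- first, Φ ≥ 0 or the hypotheses are contradictory
  by_cases hΦ : 0 ≤ Φ
  · -- main case
    intro N x hx
    set r := 4 * ‖x‖ / (3 * ‖y‖) with hr
    have hr0 : 0 ≤ r := by positivity
    have hr23 : r ≤ 2/3 := by
      rw [hr, div_le_iff₀ (by positivity)]
      linarith
    have hball : x ∈ ball (0 : Euc d) ‖y‖ := mem_ball_zero_iff.mpr (by linarith)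
    have hsum := hSum x hball
    have htail : HasSum (fun n => J (n + (N + 1)) x)
        (fundSol d (x - y) - ∑ m ∈ Finset.range (N + 1), J m x) :=
      (hasSum_nat_add_iff (f := fun m => J m x) (N + 1)).mpr (by simpa using hsum)
    set A := C * ((N : ℝ) + 1) ^ p * r ^ (N + 1) * Φ with hA
    have hA0 : 0 ≤ A :=
      mul_nonneg (mul_nonneg (mul_nonneg hC (by positivity)) (by positivity)) hΦ
    have hbound : ∀ n : ℕ,
        |J (n + (N + 1)) x| ≤ A * (((n : ℝ) + 1) ^ p * (2/3 : ℝ) ^ n) := by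
      intro n
      have h1 : ((n + (N + 1) : ℕ) : ℝ) ^ p ≤ (((N : ℝ) + 1) * ((n : ℝ) + 1)) ^ p := by
        apply pow_le_pow_left₀ (by positivity) _ p
        push_cast
        nlinarith [mul_nonneg (Nat.cast_nonneg (α := ℝ) n) (Nat.cast_nonneg (α := ℝ) N)]
      have h2 : r ^ (n + (N + 1)) ≤ r ^ (N + 1) * (2/3 : ℝ) ^ n := by
        rw [pow_add, mul_comm]
        exact mul_le_mul_of_nonneg_left (pow_le_pow_left₀ hr0 hr23 n) (by positivity)
      calc |J (n + (N + 1)) x|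
          ≤ C * ((n + (N + 1) : ℕ) : ℝ) ^ p * r ^ (n + (N + 1)) * Φ :=
            hJb _ (by omega) x
        _ ≤ C * ((((N : ℝ) + 1) * ((n : ℝ) + 1)) ^ p) * (r ^ (N + 1) * (2/3 : ℝ) ^ n) * Φ := by
            apply mul_le_mul_of_nonneg_right _ hΦ
            apply mul_le_mul (mul_le_mul_of_nonneg_left h1 hC) h2 (by positivity)
            exact mul_nonneg hC (by positivity)
        _ = A * (((n : ℝ) + 1) ^ p * (2/3 : ℝ) ^ n) := by
            rw [hA, mul_pow]; ring
    have hsummAbs : Summable (fun n => |J (n + (N + 1)) x|) := htail.summable.abs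
    have h1 : |fundSol d (x - y) - ∑ m ∈ Finset.range (N + 1), J m x|
        ≤ ∑' n, |J (n + (N + 1)) x| := by
      rw [← htail.tsum_eq]
      simpa [Real.norm_eq_abs] using
        norm_tsum_le_tsum_norm (f := fun n => J (n + (N + 1)) x)
          (by simpa [Real.norm_eq_abs] using hsummAbs)
    have h2 : ∑' n, |J (n + (N + 1)) x|
        ≤ ∑' n : ℕ, A * (((n : ℝ) + 1) ^ p * (2/3 : ℝ) ^ n) :=
      Summable.tsum_le_tsum hbound hsummAbs ((summable_aux' p).mul_left A)
    rw [tsum_mul_left, ← hM] at h2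
    have hB : 0 ≤ ((N : ℝ) + 1) ^ p * r ^ (N + 1) * Φ :=
      mul_nonneg (mul_nonneg (by positivity) (by positivity)) hΦ
    calc |fundSol d (x - y) - ∑ m ∈ Finset.range (N + 1), J m x|
        ≤ A * M := le_trans h1 h2
      _ = C * M * (((N : ℝ) + 1) ^ p * r ^ (N + 1) * Φ) := by rw [hA]; ring
      _ ≤ (C * M + 1) * (((N : ℝ) + 1) ^ p * r ^ (N + 1) * Φ) :=
          mul_le_mul_of_nonneg_right (by linarith) hB
      _ = (C * M + 1) * ((N : ℝ) + 1) ^ p * r ^ (N + 1) * Φ := by ring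
  · -- contradiction case : Φ < 0 is impossible
    exfalso
    push_neg at hΦ
    set x' : Euc d := (2 : ℝ)⁻¹ • y with hx'def
    have hx'norm : ‖x'‖ = ‖y‖ / 2 := by
      rw [hx'def, norm_smul, Real.norm_eq_abs]
      rw [abs_of_pos (by norm_num)]
      ring
    have hr' : 0 < 4 * ‖x'‖ / (3 * ‖y‖) := by
      rw [hx'norm]; positivity
    rcases hC.eq_or_lt with hC0 | hCpos
    · -- C = 0 : all J m (m ≥ 1) vanish and fundSol is constant on the ball, absurd
      have hJ0 : ∀ m : ℕ, 1 ≤ m → ∀ z : Euc d, J m z = 0 := by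
        intro m hm z
        have := hJb m hm z
        rw [← hC0] at this
        simp only [zero_mul] at this
        exact abs_eq_zero.mp (le_antisymm this (abs_nonneg _))
      have hball0 : (0 : Euc d) ∈ ball (0 : Euc d) ‖y‖ := mem_ball_zero_iff.mpr (by simpa)
      have hballx' : x' ∈ ball (0 : Euc d) ‖y‖ :=
        mem_ball_zero_iff.mpr (by rw [hx'norm]; linarith)
      have hs0 : fundSol d ((0 : Euc d) - y) = J 0 0 :=
        (hSum 0 hball0).unique
          (hasSum_single 0 (fun m hm => hJ0 m (Nat.one_le_iff_ne_zero.mpr hm) 0))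
      have hs1 : fundSol d (x' - y) = J 0 x' :=
        (hSum x' hballx').unique
          (hasSum_single 0 (fun m hm => hJ0 m (Nat.one_le_iff_ne_zero.mpr hm) x'))
      have hJ00 : J 0 0 = J 0 x' := by
        obtain ⟨q, hq0, -, hqe⟩ := hJ 0
        rw [hqe]
        exact eval_const_of_homog0' q hq0 _ _
      have heq : fundSol d ((0 : Euc d) - y) = fundSol d (x' - y) := by
        rw [hs0, hs1, hJ00]
      have hnorm1 : ‖(0 : Euc d) - y‖ = ‖y‖ := by rw [zero_sub, norm_neg]
      have hnorm2 : ‖x' - y‖ = ‖y‖ / 2 := by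
        have : x' - y = ((2 : ℝ)⁻¹ - 1) • y := by
          rw [hx'def, sub_smul, one_smul]
        rw [this, norm_smul, Real.norm_eq_abs]
        rw [show |(2 : ℝ)⁻¹ - 1| = 2⁻¹ by norm_num [abs_of_neg]]
        ring
      exact fundSol_ne' hd ((0 : Euc d) - y) (x' - y)
        (by rw [hnorm2]; linarith) (by rw [hnorm1, hnorm2]; linarith) heq
    · -- C > 0 : the bound on |J 1 x'| becomes negative, absurd
      have hb := hJb 1 le_rfl x'
      have h1p : ((1 : ℕ) : ℝ) ^ p = 1 := by norm_num
      rw [h1p, pow_one] at hb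
      have hneg : C * 1 * (4 * ‖x'‖ / (3 * ‖y‖)) * Φ < 0 :=
        mul_neg_of_pos_of_neg (by positivity) hΦ
      have := abs_nonneg (J 1 x')
      nlinarith
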